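/- arXiv:2202.07514 — 2 statements merged into one kernel-verified Lean document; each statement's English description precedes it below -/
import Mathlib

section
/- Under these hypotheses (maximal quantum violation of the inequality I₃), the subspace V = span{ψ, A₁ψ, A₂ψ, A₃ψ, B₁ψ, B₂ψ, B₃ψ, A₁B₁ψ} has dimension 8 and there exists a linear isometric equivalence e : V ≃ ℂ² ⊗ ℂ² ⊗ ℂ² such that e(Aᵢ v) = Xᵢ e(v) and e(Bᵢ v) = Zᵢ e(v) for every v ∈ V and i ∈ {1,2,3}, and moreover e(ψ) = |G'⟩, where |G'⟩ = (1/√8)(|000⟩ + |100⟩ + |010⟩ − |110⟩ + |001⟩ − |101⟩ − |011⟩ − |111⟩) is the three-qubit complete-graph state (|abc⟩ denotes |a⟩⊗|b⟩⊗|c⟩ in the standard basis of ℂ² ⊗ ℂ² ⊗ ℂ²). -/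
/-- The Pauli matrix `X = !![0, 1; 1, 0]`. -/
noncomputable def PauliX : Matrix (Fin 2) (Fin 2) ℂ := !![0, 1; 1, 0]

/-- The Pauli matrix `Z = !![1, 0; 0, -1]`. -/
noncomputable def PauliZ : Matrix (Fin 2) (Fin 2) ℂ := !![1, 0; 0, -1]

/-- The operator on `(ℂ²)^{⊗n}` (realised as `EuclideanSpace ℂ (Fin n → Fin 2)`)
acting as the one-qubit matrix `M` on the `i`-th tensor factor and as the identity
on all other factors. -/
noncomputable def tensorFactor (n : ℕ) (M : Matrix (Fin 2) (Fin 2) ℂ) (i : Fin n) :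
    Matrix (Fin n → Fin 2) (Fin n → Fin 2) ℂ :=
  Matrix.of fun f g =>
    M (f i) (g i) * ∏ j ∈ Finset.univ.erase i, (if f j = g j then (1 : ℂ) else 0)

/-- The three-qubit complete-graph state
`|G'⟩ = (1/√8)(|000⟩+|100⟩+|010⟩−|110⟩+|001⟩−|101⟩−|011⟩−|111⟩)`,
where `|abc⟩` is the standard basis vector of `ℂ² ⊗ ℂ² ⊗ ℂ²` indexed by
`![a,b,c] : Fin 3 → Fin 2`. -/
noncomputable def graphState3 : EuclideanSpace ℂ (Fin 3 → Fin 2) :=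
  ((Real.sqrt 8 : ℂ))⁻¹ •
    (EuclideanSpace.single ![0, 0, 0] (1 : ℂ) + EuclideanSpace.single ![1, 0, 0] 1
      + EuclideanSpace.single ![0, 1, 0] 1 - EuclideanSpace.single ![1, 1, 0] 1
      + EuclideanSpace.single ![0, 0, 1] 1 - EuclideanSpace.single ![1, 0, 1] 1
      - EuclideanSpace.single ![0, 1, 1] 1 - EuclideanSpace.single ![1, 1, 1] 1)

set_option maxRecDepth 10000

/-! ### Auxiliary lemmas on the Euclidean side -/

lemma tEL_apply {n : Type*} [Fintype n] [DecidableEq n] (M : Matrix n n ℂ)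
    (x : EuclideanSpace ℂ n) (f : n) :
    (Matrix.toEuclideanLin M x) f = ∑ g, M f g * x g := by
  simp only [Matrix.toEuclideanLin_apply, Matrix.mulVec, dotProduct]

lemma tf_single (M : Matrix (Fin 2) (Fin 2) ℂ) (i : Fin 3) (g : Fin 3 → Fin 2) (c : ℂ)
    (f : Fin 3 → Fin 2) :
    (Matrix.toEuclideanLin (tensorFactor 3 M i) (EuclideanSpace.single g c)) f
      = M (f i) (g i) * (∏ j ∈ Finset.univ.erase i, (if f j = g j then (1:ℂ) else 0)) * c := by
  rw [tEL_apply]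
  rw [Finset.sum_eq_single g]
  · rw [EuclideanSpace.single_apply, if_pos rfl]; rfl
  · intro b _ hb
    rw [EuclideanSpace.single_apply, if_neg hb, mul_zero]
  · intro h; exact absurd (Finset.mem_univ g) h

lemma pXaa (a : Fin 2) : PauliX a a = 0 := by fin_cases a <;> simp [PauliX]
lemma pXba (a : Fin 2) : PauliX (a + 1) a = 1 := by fin_cases a <;> simp [PauliX]
lemma pZab (a b : Fin 2) (h : ¬ a = b) : PauliZ a b = 0 := by
  fin_cases a <;> fin_cases b <;> simp_all [PauliZ]
lemma pZaa (a : Fin 2) : PauliZ a a = (if a = 0 then 1 else -1) := by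
  fin_cases a <;> simp [PauliZ]
lemma fin2_ne (a b : Fin 2) (h : ¬ a = b) : a = b + 1 := by revert a b h; decide
lemma fin2_nsucc (a : Fin 2) : ¬ a = a + 1 := by revert a; decide
lemma fin2_aa (a : Fin 2) : a + 1 + 1 = a := by revert a; decide

lemma prod_ones (i : Fin 3) (f g : Fin 3 → Fin 2) (hall : ∀ j, j ≠ i → f j = g j) :
    (∏ j ∈ Finset.univ.erase i, (if f j = g j then (1:ℂ) else 0)) = 1 := by
  rw [Finset.prod_congr rfl (g := fun _ => (1:ℂ))
    (fun j hj => if_pos (hall j (Finset.ne_of_mem_erase hj)))]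
  exact Finset.prod_const_one

lemma prod_zero (i : Fin 3) (f g : Fin 3 → Fin 2) (j : Fin 3) (hj : j ≠ i) (hfg : ¬ f j = g j) :
    (∏ j ∈ Finset.univ.erase i, (if f j = g j then (1:ℂ) else 0)) = 0 :=
  Finset.prod_eq_zero (Finset.mem_erase.mpr ⟨hj, Finset.mem_univ j⟩) (if_neg hfg)

lemma X_single (i : Fin 3) (g : Fin 3 → Fin 2) (c : ℂ) :
    Matrix.toEuclideanLin (tensorFactor 3 PauliX i) (EuclideanSpace.single g c)
      = EuclideanSpace.single (Function.update g i (g i + 1)) c := by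
  ext f
  rw [tf_single, EuclideanSpace.single_apply]
  by_cases hall : ∀ j, j ≠ i → f j = g j
  · by_cases hfi : f i = g i
    · have hfg : f = g := funext fun j => by
        by_cases hj : j = i
        · rw [hj]; exact hfi
        · exact hall j hj
      rw [if_neg, hfi, pXaa, zero_mul, zero_mul]
      rw [hfg]
      intro hc
      exact fin2_nsucc (g i) (by
        have := congrFun hc i
        rwa [Function.update_self] at this)
    · have hfi' : f i = g i + 1 := fin2_ne _ _ hfi
      have hfg : f = Function.update g i (g i + 1) := funext fun j => by
        by_cases hj : j = i
        · rw [hj, Function.update_self]; exact hfi'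
        · rw [Function.update_of_ne hj]; exact hall j hj
      rw [if_pos hfg, prod_ones i f g hall, hfi', pXba, one_mul, one_mul]
  · push_neg at hall
    obtain ⟨j, hj, hfg⟩ := hall
    rw [prod_zero i f g j hj hfg, mul_zero, zero_mul, if_neg]
    intro hc
    exact hfg (by rw [hc, Function.update_of_ne hj])

lemma Z_single (i : Fin 3) (g : Fin 3 → Fin 2) (c : ℂ) :
    Matrix.toEuclideanLin (tensorFactor 3 PauliZ i) (EuclideanSpace.single g c)
      = EuclideanSpace.single g ((if g i = 0 then 1 else -1) * c) := by
  ext f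
  rw [tf_single, EuclideanSpace.single_apply]
  by_cases hfg : f = g
  · rw [if_pos hfg, hfg, pZaa, prod_ones i g g (fun _ _ => rfl), mul_one]
  · rw [if_neg hfg]
    by_cases hfi : f i = g i
    · have : ∃ j, j ≠ i ∧ ¬ f j = g j := by
        by_contra hc
        push_neg at hc
        exact hfg (funext fun j => by
          by_cases hj : j = i
          · rw [hj]; exact hfi
          · exact hc j hj)
      obtain ⟨j, hj, h2⟩ := this
      rw [prod_zero i f g j hj h2, mul_zero, zero_mul]
    · rw [pZab _ _ hfi, zero_mul, zero_mul]

noncomputable abbrev KS := EuclideanSpace ℂ (Fin 3 → Fin 2)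
noncomputable def XA (i : Fin 3) : KS →L[ℂ] KS :=
  LinearMap.toContinuousLinearMap (Matrix.toEuclideanLin (tensorFactor 3 PauliX i))
noncomputable def ZB (i : Fin 3) : KS →L[ℂ] KS :=
  LinearMap.toContinuousLinearMap (Matrix.toEuclideanLin (tensorFactor 3 PauliZ i))

lemma XA_single (i : Fin 3) (g : Fin 3 → Fin 2) (c : ℂ) :
    XA i (EuclideanSpace.single g c) = EuclideanSpace.single (Function.update g i (g i + 1)) c :=
  X_single i g c
lemma ZB_single (i : Fin 3) (g : Fin 3 → Fin 2) (c : ℂ) :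
    ZB i (EuclideanSpace.single g c) = EuclideanSpace.single g ((if g i = 0 then 1 else -1) * c) :=
  Z_single i g c

lemma ES_decomp (x : KS) : x = ∑ f, EuclideanSpace.single f (x f) := by
  ext j
  rw [show (∑ f, EuclideanSpace.single f (x f)) j = ∑ f, EuclideanSpace.single f (x f) j from
    by rw [WithLp.ofLp_sum]; exact Finset.sum_apply j Finset.univ _]
  simp [EuclideanSpace.single_apply]

lemma hXinv : ∀ (i : Fin 3) (x : KS), XA i (XA i x) = x := by
  intro i x
  conv_lhs => rw [ES_decomp x]
  rw [map_sum, map_sum]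
  simp only [XA_single, Function.update_self, Function.update_idem, fin2_aa,
    Function.update_eq_self]
  exact (ES_decomp x).symm

lemma hZinv : ∀ (i : Fin 3) (x : KS), ZB i (ZB i x) = x := by
  intro i x
  conv_lhs => rw [ES_decomp x]
  rw [map_sum, map_sum]
  simp only [ZB_single]
  have h : ∀ (a : Fin 2) (c : ℂ),
      (if a = 0 then (1:ℂ) else -1) * ((if a = 0 then (1:ℂ) else -1) * c) = c := by
    intro a c; by_cases h : a = 0 <;> simp [h]
  simp only [h]
  exact (ES_decomp x).symm

lemma hXXc : ∀ i j, i ≠ j → ∀ x : KS, XA i (XA j x) = XA j (XA i x) := by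
  intro i j hij x
  conv_lhs => rw [ES_decomp x]
  conv_rhs => rw [ES_decomp x]
  rw [map_sum, map_sum, map_sum, map_sum]
  apply Finset.sum_congr rfl
  intro g _
  simp only [XA_single, Function.update_of_ne hij, Function.update_of_ne hij.symm]
  rw [Function.update_comm hij]

lemma hXZc : ∀ i j, i ≠ j → ∀ x : KS, XA i (ZB j x) = ZB j (XA i x) := by
  intro i j hij x
  conv_lhs => rw [ES_decomp x]
  conv_rhs => rw [ES_decomp x]
  rw [map_sum, map_sum, map_sum, map_sum]
  apply Finset.sum_congr rfl
  intro g _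
  rw [ZB_single, XA_single, XA_single, ZB_single, Function.update_of_ne (Ne.symm hij)]

lemma hZZc : ∀ i j, i ≠ j → ∀ x : KS, ZB i (ZB j x) = ZB j (ZB i x) := by
  intro i j hij x
  conv_lhs => rw [ES_decomp x]
  conv_rhs => rw [ES_decomp x]
  rw [map_sum, map_sum, map_sum, map_sum]
  apply Finset.sum_congr rfl
  intro g _
  simp only [ZB_single]
  ring_nf

lemma pX_herm (a b : Fin 2) : (starRingEnd ℂ) (PauliX a b) = PauliX b a := by
  fin_cases a <;> fin_cases b <;> simp [PauliX]
lemma pZ_herm (a b : Fin 2) : (starRingEnd ℂ) (PauliZ a b) = PauliZ b a := by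
  fin_cases a <;> fin_cases b <;> simp [PauliZ]

lemma tf_herm (M : Matrix (Fin 2) (Fin 2) ℂ) (hM : ∀ a b, (starRingEnd ℂ) (M a b) = M b a)
    (i : Fin 3) (f g : Fin 3 → Fin 2) :
    (starRingEnd ℂ) (tensorFactor 3 M i f g) = tensorFactor 3 M i g f := by
  simp only [tensorFactor, Matrix.of_apply, map_mul, map_prod, apply_ite (starRingEnd ℂ),
    map_one, map_zero, hM]
  congr 1
  exact Finset.prod_congr rfl (fun j _ => if_congr eq_comm rfl rfl)

lemma sa {n : Type*} [Fintype n] [DecidableEq n] (M : Matrix n n ℂ)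
    (hM : ∀ f g, (starRingEnd ℂ) (M f g) = M g f) (x y : EuclideanSpace ℂ n) :
    (inner ℂ (Matrix.toEuclideanLin M x) y : ℂ) = inner ℂ x (Matrix.toEuclideanLin M y) := by
  simp only [PiLp.inner_apply, RCLike.inner_apply, tEL_apply, map_sum, map_mul, hM,
    Finset.sum_mul, Finset.mul_sum]
  rw [Finset.sum_comm]
  apply Finset.sum_congr rfl
  intro g _
  apply Finset.sum_congr rfl
  intro f _
  ring

lemma hXsa : ∀ (i : Fin 3) (x y : KS), (inner ℂ (XA i x) y : ℂ) = inner ℂ x (XA i y) :=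
  fun i x y => sa _ (tf_herm _ pX_herm i) x y
lemma hZsa : ∀ (i : Fin 3) (x y : KS), (inner ℂ (ZB i x) y : ℂ) = inner ℂ x (ZB i y) :=
  fun i x y => sa _ (tf_herm _ pZ_herm i) x y

lemma upd0 (a b c d : Fin 2) : Function.update ![a,b,c] 0 d = ![d,b,c] := by
  funext j; fin_cases j <;> simp [Function.update]
lemma upd1 (a b c d : Fin 2) : Function.update ![a,b,c] 1 d = ![a,d,c] := by
  funext j; fin_cases j <;> simp [Function.update, Fin.ext_iff]
lemma upd2 (a b c d : Fin 2) : Function.update ![a,b,c] 2 d = ![a,b,d] := by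
  funext j; fin_cases j <;> simp [Function.update, Fin.ext_iff]
lemma sneg (g : Fin 3 → Fin 2) (c : ℂ) :
    EuclideanSpace.single g (-c) = -EuclideanSpace.single g c := by
  ext j; by_cases h : j = g <;> simp [EuclideanSpace.single_apply, h]

lemma hK1 : XA 0 (ZB 1 (ZB 2 graphState3)) = graphState3 := by
  simp only [graphState3, map_smul, map_add, map_sub, XA_single, ZB_single]
  norm_num [upd0, upd1, upd2, sneg]
  simp only [show (1 + 1 : Fin 2) = 0 by decide, Matrix.cons_val_two, Matrix.tail_cons, Matrix.head_cons, Matrix.cons_val_zero, Matrix.cons_val_one]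
  norm_num [sneg]
  module

lemma hK2 : ZB 0 (XA 1 (ZB 2 graphState3)) = graphState3 := by
  simp only [graphState3, map_smul, map_add, map_sub, XA_single, ZB_single]
  norm_num [upd0, upd1, upd2, sneg]
  simp only [show (1 + 1 : Fin 2) = 0 by decide, Matrix.cons_val_two, Matrix.tail_cons, Matrix.head_cons, Matrix.cons_val_zero, Matrix.cons_val_one]
  norm_num [sneg]
  module

lemma hK3 : ZB 0 (ZB 1 (XA 2 graphState3)) = graphState3 := by
  simp only [graphState3, map_smul, map_add, map_sub, XA_single, ZB_single]
  norm_num [upd0, upd1, upd2, sneg]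
  simp only [show (1 + 1 : Fin 2) = 0 by decide, Matrix.cons_val_two, Matrix.tail_cons, Matrix.head_cons, Matrix.cons_val_zero, Matrix.cons_val_one]
  norm_num [sneg]
  module

lemma hK4 : XA 0 (XA 1 (XA 2 graphState3)) = -graphState3 := by
  simp only [graphState3, map_smul, map_add, map_sub, XA_single, ZB_single]
  norm_num [upd0, upd1, upd2, sneg]
  simp only [show (1 + 1 : Fin 2) = 0 by decide, Matrix.cons_val_two, Matrix.tail_cons, Matrix.head_cons, Matrix.cons_val_zero, Matrix.cons_val_one]
  norm_num [sneg]
  module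

lemma hGG : (inner ℂ graphState3 graphState3 : ℂ) = 1 := by
  simp only [graphState3, inner_smul_left, inner_smul_right, inner_add_left, inner_add_right,
    inner_sub_left, inner_sub_right]
  simp (config := { decide := true }) [graphState3, inner_add_left, inner_add_right,
    inner_sub_left, inner_sub_right, inner_smul_left, inner_smul_right,
    EuclideanSpace.inner_single_left, EuclideanSpace.single_apply, Complex.conj_ofReal, map_inv₀]
  ring_nf
  rw [show ((Real.sqrt 8:ℝ):ℂ)⁻¹ ^ 2 = ((8:ℝ):ℂ)⁻¹ by
    rw [← Complex.ofReal_inv, ← Complex.ofReal_pow, ← Complex.ofReal_inv]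
    norm_num [inv_pow, Real.sq_sqrt]]
  norm_num

lemma hGnorm : ‖graphState3‖ = 1 := by
  have h := hGG
  rw [inner_self_eq_norm_sq_to_K (𝕜 := ℂ)] at h
  norm_cast at h
  have h' : ‖graphState3‖^2 = (1:ℝ) :=
    RCLike.ofReal_injective (K := ℂ) (by rw [RCLike.ofReal_one]; exact h)
  nlinarith [norm_nonneg graphState3, h']
set_option maxRecDepth 10000

noncomputable def sigA : Fin 3 → Fin 8 → ℂ :=
  ![![1,1,-1,-1,1,1,1,1], ![1,-1,1,-1,1,1,1,1], ![1,-1,-1,1,1,1,1,1]]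
def piA : Fin 3 → Fin 8 → Fin 8 :=
  ![![1,0,3,2,7,6,5,4], ![2,3,0,1,6,7,4,5], ![3,2,1,0,5,4,7,6]]
noncomputable def sigB : Fin 3 → Fin 8 → ℂ :=
  ![![1,-1,1,1,1,1,1,-1], ![1,1,-1,1,1,1,1,-1], ![1,1,1,-1,1,1,1,-1]]
def piB : Fin 3 → Fin 8 → Fin 8 :=
  ![![4,7,6,5,0,3,2,1], ![5,6,7,4,3,0,1,2], ![6,5,4,7,2,1,0,3]]

lemma key {H : Type*} [NormedAddCommGroup H] [InnerProductSpace ℂ H]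
    (A B : Fin 3 → H →L[ℂ] H)
    (hAsa : ∀ i (x y : H), (inner ℂ (A i x) y : ℂ) = inner ℂ x (A i y))
    (hBsa : ∀ i (x y : H), (inner ℂ (B i x) y : ℂ) = inner ℂ x (B i y))
    (hAinv : ∀ i (x : H), A i (A i x) = x)
    (hBinv : ∀ i (x : H), B i (B i x) = x)
    (hAA : ∀ i j, i ≠ j → ∀ x : H, A i (A j x) = A j (A i x))
    (hAB : ∀ i j, i ≠ j → ∀ x : H, A i (B j x) = B j (A i x))
    (hBB : ∀ i j, i ≠ j → ∀ x : H, B i (B j x) = B j (B i x))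
    (ψ : H) (hψ : ‖ψ‖ = 1)
    (h1 : A 0 (B 1 (B 2 ψ)) = ψ)
    (h2 : B 0 (A 1 (B 2 ψ)) = ψ)
    (h3 : B 0 (B 1 (A 2 ψ)) = ψ)
    (h4 : A 0 (A 1 (A 2 ψ)) = -ψ) :
    ∀ u : Fin 8 → H, u = ![ψ, A 0 ψ, A 1 ψ, A 2 ψ, B 0 ψ, B 1 ψ, B 2 ψ, A 0 (B 0 ψ)] →
      Orthonormal ℂ u ∧ (∀ i j, A i (u j) = sigA i j • u (piA i j)) ∧
        (∀ i j, B i (u j) = sigB i j • u (piB i j)) := by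
  intro u hu
  have inv_swap : ∀ (T : H →L[ℂ] H), (∀ x, T (T x) = x) → ∀ {a b : H}, T a = b → a = T b := by
    intro T hT a b h
    rw [← h, hT]
  have d1 : B 1 (B 2 ψ) = A 0 ψ := inv_swap _ (hAinv 0) h1
  have d1a : B 2 ψ = B 1 (A 0 ψ) := inv_swap _ (hBinv 1) d1
  have h1' : A 0 (B 2 (B 1 ψ)) = ψ := by rw [hBB 2 1 (by decide)]; exact h1
  have d1' : B 2 (B 1 ψ) = A 0 ψ := inv_swap _ (hAinv 0) h1'
  have d1b : B 1 ψ = B 2 (A 0 ψ) := inv_swap _ (hBinv 2) d1'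
  have d2 : A 1 (B 2 ψ) = B 0 ψ := inv_swap _ (hBinv 0) h2
  have d2a : B 2 ψ = A 1 (B 0 ψ) := inv_swap _ (hAinv 1) d2
  have h2' : B 0 (B 2 (A 1 ψ)) = ψ := by rw [← hAB 1 2 (by decide)]; exact h2
  have tB22 : B 2 (A 1 ψ) = B 0 ψ := inv_swap _ (hBinv 0) h2'
  have d2c : A 1 ψ = B 2 (B 0 ψ) := inv_swap _ (hBinv 2) tB22
  have d2b : B 0 (A 1 ψ) = B 2 ψ := by rw [d2c, hBB 0 2 (by decide), hBinv]
  have d3 : B 1 (A 2 ψ) = B 0 ψ := inv_swap _ (hBinv 0) h3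
  have d3a : A 2 ψ = B 1 (B 0 ψ) := inv_swap _ (hBinv 1) d3
  have h3' : B 1 (B 0 (A 2 ψ)) = ψ := by rw [← hBB 0 1 (by decide)]; exact h3
  have d3b : B 0 (A 2 ψ) = B 1 ψ := inv_swap _ (hBinv 1) h3'
  have d4 : A 1 (A 2 ψ) = -(A 0 ψ) := by
    have := inv_swap _ (hAinv 0) h4
    rwa [map_neg] at this
  have h4' : A 1 (A 0 (A 2 ψ)) = -ψ := by rw [← hAA 0 1 (by decide)]; exact h4
  have d4a : A 0 (A 2 ψ) = -(A 1 ψ) := by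
    have := inv_swap _ (hAinv 1) h4'
    rwa [map_neg] at this
  have h4'' : A 2 (A 0 (A 1 ψ)) = -ψ := by
    rw [← hAA 0 2 (by decide), ← hAA 1 2 (by decide)]; exact h4
  have d4b : A 0 (A 1 ψ) = -(A 2 ψ) := by
    have := inv_swap _ (hAinv 2) h4''
    rwa [map_neg] at this
  have c1 : A 1 (B 1 ψ) = A 0 (B 0 ψ) := by
    rw [d1b, hAB 1 2 (by decide), hAA 1 0 (by decide), ← hAB 0 2 (by decide),
      ← hAB 1 2 (by decide), d2]
  have c2' : A 1 ψ = -(A 0 (A 2 ψ)) := by rw [d4a, neg_neg]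
  have c2 : B 1 (A 1 ψ) = -(A 0 (B 0 ψ)) := by
    rw [c2', map_neg, ← hAB 0 1 (by decide), d3]
  have c3 : A 2 (B 2 ψ) = A 0 (B 0 ψ) := by
    rw [d1a, hAB 2 1 (by decide), hAA 2 0 (by decide), d4a, map_neg, c2, neg_neg]
  have c4 : B 2 (A 2 ψ) = -(A 0 (B 0 ψ)) := by
    rw [d3a, hBB 2 1 (by decide), hBB 2 0 (by decide), d2a, ← hAB 1 0 (by decide), hBinv, c2]
  have c5' : A 0 ψ = -(A 1 (A 2 ψ)) := by rw [d4, neg_neg]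
  have c5 : B 0 (A 0 ψ) = -(A 0 (B 0 ψ)) := by
    rw [c5', map_neg, ← hAB 1 0 (by decide), d3b, c1]
  have tA05 : A 0 (B 1 ψ) = B 2 ψ := by rw [d1b, hAB 0 2 (by decide), hAinv]
  have tA06 : A 0 (B 2 ψ) = B 1 ψ := by rw [d1a, hAB 0 1 (by decide), hAinv]
  have tA12 : A 1 (A 0 ψ) = -(A 2 ψ) := by rw [← hAA 0 1 (by decide)]; exact d4b
  have tA14 : A 1 (B 0 ψ) = B 2 ψ := d2a.symm
  have tA17 : A 1 (A 0 (B 0 ψ)) = B 1 ψ := by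
    rw [hAA 1 0 (by decide), tA14, tA06]
  have tA21 : A 2 (A 0 ψ) = -(A 1 ψ) := by rw [hAA 2 0 (by decide)]; exact d4a
  have tA23 : A 2 (A 1 ψ) = -(A 0 ψ) := by rw [hAA 2 1 (by decide)]; exact d4
  have tA24 : A 2 (B 0 ψ) = B 1 ψ := by rw [hAB 2 0 (by decide)]; exact d3b
  have tA25 : A 2 (B 1 ψ) = B 0 ψ := by rw [hAB 2 1 (by decide)]; exact d3
  have tA27 : A 2 (A 0 (B 0 ψ)) = B 2 ψ := by rw [hAA 2 0 (by decide), tA24, tA05]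
  have tB05 : B 0 (B 1 ψ) = A 2 ψ := by rw [hBB 0 1 (by decide)]; exact d3a.symm
  have tB06 : B 0 (B 2 ψ) = A 1 ψ := by rw [d2a, ← hAB 1 0 (by decide), hBinv]
  have tB07 : B 0 (A 0 (B 0 ψ)) = -(A 0 ψ) := by
    have hw : A 0 (B 0 ψ) = -(B 0 (A 0 ψ)) := by rw [c5, neg_neg]
    rw [hw, map_neg, hBinv]
  have tB11 : B 1 (A 0 ψ) = B 2 ψ := d1a.symm
  have tB14 : B 1 (B 0 ψ) = A 2 ψ := d3a.symm
  have tB17 : B 1 (A 0 (B 0 ψ)) = -(A 1 ψ) := by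
    have hw : A 0 (B 0 ψ) = -(B 1 (A 1 ψ)) := by rw [c2, neg_neg]
    rw [hw, map_neg, hBinv]
  have tB21 : B 2 (A 0 ψ) = B 1 ψ := d1b.symm
  have tB24 : B 2 (B 0 ψ) = A 1 ψ := d2c.symm
  have tB25 : B 2 (B 1 ψ) = A 0 ψ := d1'
  have tB27 : B 2 (A 0 (B 0 ψ)) = -(A 2 ψ) := by
    have hw : A 0 (B 0 ψ) = -(B 2 (A 2 ψ)) := by rw [c4, neg_neg]
    rw [hw, map_neg, hBinv]
  -- inner-product preservation
  have nA : ∀ (i : Fin 3) (x y : H), (inner ℂ (A i x) (A i y) : ℂ) = inner ℂ x y := by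
    intro i x y; rw [hAsa, hAinv]
  have nB : ∀ (i : Fin 3) (x y : H), (inner ℂ (B i x) (B i y) : ℂ) = inner ℂ x y := by
    intro i x y; rw [hBsa, hBinv]
  have ip1 : (inner ℂ ψ ψ : ℂ) = 1 := by
    rw [inner_self_eq_norm_sq_to_K, hψ]; norm_num
  have hg1 : ∀ x y : H, (inner ℂ (A 0 (B 1 (B 2 x))) (A 0 (B 1 (B 2 y))) : ℂ) = inner ℂ x y := by
    intro x y; rw [nA, nB, nB]
  have hg2 : ∀ x y : H, (inner ℂ (B 0 (A 1 (B 2 x))) (B 0 (A 1 (B 2 y))) : ℂ) = inner ℂ x y := by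
    intro x y; rw [nB, nA, nB]
  have hg3 : ∀ x y : H, (inner ℂ (B 0 (B 1 (A 2 x))) (B 0 (B 1 (A 2 y))) : ℂ) = inner ℂ x y := by
    intro x y; rw [nB, nB, nA]
  have o1 : ∀ (g : H → H), (∀ x y : H, (inner ℂ (g x) (g y) : ℂ) = inner ℂ x y) →
      ∀ {x y : H}, g x = x → g y = -y → (inner ℂ x y : ℂ) = 0 := by
    intro g hg x y hx hy
    have h := hg x y
    rw [hx, hy, inner_neg_right] at h
    linear_combination -h/2
  have o2 : ∀ (g : H → H), (∀ x y : H, (inner ℂ (g x) (g y) : ℂ) = inner ℂ x y) →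
      ∀ {x y : H}, g x = -x → g y = y → (inner ℂ x y : ℂ) = 0 := by
    intro g hg x y hx hy
    have h := hg x y
    rw [hx, hy, inner_neg_left] at h
    linear_combination -h/2
  -- eigenvector facts
  have G1_0 : A 0 (B 1 (B 2 ψ)) = ψ := h1
  have G1_1 : A 0 (B 1 (B 2 (A 0 ψ))) = A 0 ψ := by rw [tB21, hBinv]
  have G1_2 : A 0 (B 1 (B 2 (A 1 ψ))) = -(A 1 ψ) := by rw [tB22, tB14, d4a]
  have G1_3 : A 0 (B 1 (B 2 (A 2 ψ))) = -(A 2 ψ) := by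
    rw [c4]; simp only [map_neg, neg_neg]; rw [tB17]; simp only [map_neg, neg_neg]; rw [d4b]
  have G1_4 : A 0 (B 1 (B 2 (B 0 ψ))) = -(B 0 ψ) := by
    rw [tB24, c2]; simp only [map_neg, neg_neg]; rw [hAinv]
  have G1_5 : A 0 (B 1 (B 2 (B 1 ψ))) = B 1 ψ := by rw [tB25, tB11, tA06]
  have G1_6 : A 0 (B 1 (B 2 (B 2 ψ))) = B 2 ψ := by rw [hBinv, tA05]
  have G1_7 : A 0 (B 1 (B 2 (A 0 (B 0 ψ)))) = -(A 0 (B 0 ψ)) := by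
    rw [tB27]; simp only [map_neg, neg_neg]; rw [d3]
  have G2_0 : B 0 (A 1 (B 2 ψ)) = ψ := h2
  have G2_1 : B 0 (A 1 (B 2 (A 0 ψ))) = -(A 0 ψ) := by rw [tB21, c1, tB07]
  have G2_2 : B 0 (A 1 (B 2 (A 1 ψ))) = A 1 ψ := by rw [tB22, tA14, tB06]
  have G2_3 : B 0 (A 1 (B 2 (A 2 ψ))) = -(A 2 ψ) := by
    rw [c4]; simp only [map_neg, neg_neg]; rw [tA17, tB05]
  have G2_4 : B 0 (A 1 (B 2 (B 0 ψ))) = B 0 ψ := by rw [tB24, hAinv]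
  have G2_5 : B 0 (A 1 (B 2 (B 1 ψ))) = -(B 1 ψ) := by
    rw [tB25, tA12]; simp only [map_neg, neg_neg]; rw [d3b]
  have G2_6 : B 0 (A 1 (B 2 (B 2 ψ))) = B 2 ψ := by rw [hBinv, d2b]
  have G2_7 : B 0 (A 1 (B 2 (A 0 (B 0 ψ)))) = -(A 0 (B 0 ψ)) := by
    rw [tB27]; simp only [map_neg, neg_neg]; rw [d4]; simp only [map_neg, neg_neg]; rw [c5]
  have G3_0 : B 0 (B 1 (A 2 ψ)) = ψ := h3
  have G3_1 : B 0 (B 1 (A 2 (A 0 ψ))) = -(A 0 ψ) := by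
    rw [tA21]; simp only [map_neg, neg_neg]; rw [c2]; simp only [map_neg, neg_neg]; rw [tB07]
  have G3_2 : B 0 (B 1 (A 2 (A 1 ψ))) = -(A 1 ψ) := by
    rw [tA23]; simp only [map_neg, neg_neg]; rw [tB11, tB06]
  have G3_3 : B 0 (B 1 (A 2 (A 2 ψ))) = A 2 ψ := by rw [hAinv, tB05]
  have G3_4 : B 0 (B 1 (A 2 (B 0 ψ))) = B 0 ψ := by rw [tA24, hBinv]
  have G3_5 : B 0 (B 1 (A 2 (B 1 ψ))) = B 1 ψ := by rw [tA25, tB14, d3b]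
  have G3_6 : B 0 (B 1 (A 2 (B 2 ψ))) = -(B 2 ψ) := by
    rw [c3, tB17]; simp only [map_neg, neg_neg]; rw [d2b]
  have G3_7 : B 0 (B 1 (A 2 (A 0 (B 0 ψ)))) = -(A 0 (B 0 ψ)) := by
    rw [tA27, d1, c5]
  subst hu
  refine ⟨?_, ?_, ?_⟩
  · rw [orthonormal_iff_ite]
    intro i j
    fin_cases i <;> fin_cases j
    · -- (0,0)
      exact ip1
    · -- (0,1)
      exact o1 _ hg2 G2_0 G2_1
    · -- (0,2)
      exact o1 _ hg1 G1_0 G1_2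
    · -- (0,3)
      exact o1 _ hg1 G1_0 G1_3
    · -- (0,4)
      exact o1 _ hg1 G1_0 G1_4
    · -- (0,5)
      exact o1 _ hg2 G2_0 G2_5
    · -- (0,6)
      exact o1 _ hg3 G3_0 G3_6
    · -- (0,7)
      exact o1 _ hg1 G1_0 G1_7
    · -- (1,0)
      exact o2 _ hg2 G2_1 G2_0
    · -- (1,1)
      show (inner ℂ (A 0 ψ) (A 0 ψ) : ℂ) = 1
      rw [nA]; exact ip1
    · -- (1,2)
      exact o1 _ hg1 G1_1 G1_2
    · -- (1,3)
      exact o1 _ hg1 G1_1 G1_3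
    · -- (1,4)
      exact o1 _ hg1 G1_1 G1_4
    · -- (1,5)
      exact o2 _ hg3 G3_1 G3_5
    · -- (1,6)
      exact o2 _ hg2 G2_1 G2_6
    · -- (1,7)
      exact o1 _ hg1 G1_1 G1_7
    · -- (2,0)
      exact o2 _ hg1 G1_2 G1_0
    · -- (2,1)
      exact o2 _ hg1 G1_2 G1_1
    · -- (2,2)
      show (inner ℂ (A 1 ψ) (A 1 ψ) : ℂ) = 1
      rw [nA]; exact ip1
    · -- (2,3)
      exact o1 _ hg2 G2_2 G2_3
    · -- (2,4)
      exact o2 _ hg3 G3_2 G3_4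
    · -- (2,5)
      exact o2 _ hg1 G1_2 G1_5
    · -- (2,6)
      exact o2 _ hg1 G1_2 G1_6
    · -- (2,7)
      exact o1 _ hg2 G2_2 G2_7
    · -- (3,0)
      exact o2 _ hg1 G1_3 G1_0
    · -- (3,1)
      exact o2 _ hg1 G1_3 G1_1
    · -- (3,2)
      exact o2 _ hg2 G2_3 G2_2
    · -- (3,3)
      show (inner ℂ (A 2 ψ) (A 2 ψ) : ℂ) = 1
      rw [nA]; exact ip1
    · -- (3,4)
      exact o2 _ hg2 G2_3 G2_4
    · -- (3,5)
      exact o2 _ hg1 G1_3 G1_5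
    · -- (3,6)
      exact o2 _ hg1 G1_3 G1_6
    · -- (3,7)
      exact o1 _ hg3 G3_3 G3_7
    · -- (4,0)
      exact o2 _ hg1 G1_4 G1_0
    · -- (4,1)
      exact o2 _ hg1 G1_4 G1_1
    · -- (4,2)
      exact o1 _ hg3 G3_4 G3_2
    · -- (4,3)
      exact o1 _ hg2 G2_4 G2_3
    · -- (4,4)
      show (inner ℂ (B 0 ψ) (B 0 ψ) : ℂ) = 1
      rw [nB]; exact ip1
    · -- (4,5)
      exact o2 _ hg1 G1_4 G1_5
    · -- (4,6)
      exact o2 _ hg1 G1_4 G1_6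
    · -- (4,7)
      exact o1 _ hg2 G2_4 G2_7
    · -- (5,0)
      exact o2 _ hg2 G2_5 G2_0
    · -- (5,1)
      exact o1 _ hg3 G3_5 G3_1
    · -- (5,2)
      exact o1 _ hg1 G1_5 G1_2
    · -- (5,3)
      exact o1 _ hg1 G1_5 G1_3
    · -- (5,4)
      exact o1 _ hg1 G1_5 G1_4
    · -- (5,5)
      show (inner ℂ (B 1 ψ) (B 1 ψ) : ℂ) = 1
      rw [nB]; exact ip1
    · -- (5,6)
      exact o2 _ hg2 G2_5 G2_6
    · -- (5,7)
      exact o1 _ hg1 G1_5 G1_7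
    · -- (6,0)
      exact o2 _ hg3 G3_6 G3_0
    · -- (6,1)
      exact o1 _ hg2 G2_6 G2_1
    · -- (6,2)
      exact o1 _ hg1 G1_6 G1_2
    · -- (6,3)
      exact o1 _ hg1 G1_6 G1_3
    · -- (6,4)
      exact o1 _ hg1 G1_6 G1_4
    · -- (6,5)
      exact o1 _ hg2 G2_6 G2_5
    · -- (6,6)
      show (inner ℂ (B 2 ψ) (B 2 ψ) : ℂ) = 1
      rw [nB]; exact ip1
    · -- (6,7)
      exact o1 _ hg1 G1_6 G1_7
    · -- (7,0)
      exact o2 _ hg1 G1_7 G1_0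
    · -- (7,1)
      exact o2 _ hg1 G1_7 G1_1
    · -- (7,2)
      exact o2 _ hg2 G2_7 G2_2
    · -- (7,3)
      exact o2 _ hg3 G3_7 G3_3
    · -- (7,4)
      exact o2 _ hg2 G2_7 G2_4
    · -- (7,5)
      exact o2 _ hg1 G1_7 G1_5
    · -- (7,6)
      exact o2 _ hg1 G1_7 G1_6
    · -- (7,7)
      show (inner ℂ (A 0 (B 0 ψ)) (A 0 (B 0 ψ)) : ℂ) = 1
      rw [nA, nB]; exact ip1
  · intro i j
    fin_cases i <;> fin_cases j
    · -- A 0 , u 0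
      show A 0 (ψ) = (1:ℂ) • (A 0 ψ)
      rw [one_smul]
    · -- A 0 , u 1
      show A 0 (A 0 ψ) = (1:ℂ) • (ψ)
      rw [one_smul]; exact hAinv 0 ψ
    · -- A 0 , u 2
      show A 0 (A 1 ψ) = (-1:ℂ) • (A 2 ψ)
      rw [neg_one_smul]; exact d4b
    · -- A 0 , u 3
      show A 0 (A 2 ψ) = (-1:ℂ) • (A 1 ψ)
      rw [neg_one_smul]; exact d4a
    · -- A 0 , u 4
      show A 0 (B 0 ψ) = (1:ℂ) • (A 0 (B 0 ψ))
      rw [one_smul]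
    · -- A 0 , u 5
      show A 0 (B 1 ψ) = (1:ℂ) • (B 2 ψ)
      rw [one_smul]; exact tA05
    · -- A 0 , u 6
      show A 0 (B 2 ψ) = (1:ℂ) • (B 1 ψ)
      rw [one_smul]; exact tA06
    · -- A 0 , u 7
      show A 0 (A 0 (B 0 ψ)) = (1:ℂ) • (B 0 ψ)
      rw [one_smul]; exact hAinv 0 (B 0 ψ)
    · -- A 1 , u 0
      show A 1 (ψ) = (1:ℂ) • (A 1 ψ)
      rw [one_smul]
    · -- A 1 , u 1
      show A 1 (A 0 ψ) = (-1:ℂ) • (A 2 ψ)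
      rw [neg_one_smul]; exact tA12
    · -- A 1 , u 2
      show A 1 (A 1 ψ) = (1:ℂ) • (ψ)
      rw [one_smul]; exact hAinv 1 ψ
    · -- A 1 , u 3
      show A 1 (A 2 ψ) = (-1:ℂ) • (A 0 ψ)
      rw [neg_one_smul]; exact d4
    · -- A 1 , u 4
      show A 1 (B 0 ψ) = (1:ℂ) • (B 2 ψ)
      rw [one_smul]; exact tA14
    · -- A 1 , u 5
      show A 1 (B 1 ψ) = (1:ℂ) • (A 0 (B 0 ψ))
      rw [one_smul]; exact c1
    · -- A 1 , u 6
      show A 1 (B 2 ψ) = (1:ℂ) • (B 0 ψ)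
      rw [one_smul]; exact d2
    · -- A 1 , u 7
      show A 1 (A 0 (B 0 ψ)) = (1:ℂ) • (B 1 ψ)
      rw [one_smul]; exact tA17
    · -- A 2 , u 0
      show A 2 (ψ) = (1:ℂ) • (A 2 ψ)
      rw [one_smul]
    · -- A 2 , u 1
      show A 2 (A 0 ψ) = (-1:ℂ) • (A 1 ψ)
      rw [neg_one_smul]; exact tA21
    · -- A 2 , u 2
      show A 2 (A 1 ψ) = (-1:ℂ) • (A 0 ψ)
      rw [neg_one_smul]; exact tA23
    · -- A 2 , u 3
      show A 2 (A 2 ψ) = (1:ℂ) • (ψ)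
      rw [one_smul]; exact hAinv 2 ψ
    · -- A 2 , u 4
      show A 2 (B 0 ψ) = (1:ℂ) • (B 1 ψ)
      rw [one_smul]; exact tA24
    · -- A 2 , u 5
      show A 2 (B 1 ψ) = (1:ℂ) • (B 0 ψ)
      rw [one_smul]; exact tA25
    · -- A 2 , u 6
      show A 2 (B 2 ψ) = (1:ℂ) • (A 0 (B 0 ψ))
      rw [one_smul]; exact c3
    · -- A 2 , u 7
      show A 2 (A 0 (B 0 ψ)) = (1:ℂ) • (B 2 ψ)
      rw [one_smul]; exact tA27
  · intro i j
    fin_cases i <;> fin_cases j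
    · -- B 0 , u 0
      show B 0 (ψ) = (1:ℂ) • (B 0 ψ)
      rw [one_smul]
    · -- B 0 , u 1
      show B 0 (A 0 ψ) = (-1:ℂ) • (A 0 (B 0 ψ))
      rw [neg_one_smul]; exact c5
    · -- B 0 , u 2
      show B 0 (A 1 ψ) = (1:ℂ) • (B 2 ψ)
      rw [one_smul]; exact d2b
    · -- B 0 , u 3
      show B 0 (A 2 ψ) = (1:ℂ) • (B 1 ψ)
      rw [one_smul]; exact d3b
    · -- B 0 , u 4
      show B 0 (B 0 ψ) = (1:ℂ) • (ψ)
      rw [one_smul]; exact hBinv 0 ψ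
    · -- B 0 , u 5
      show B 0 (B 1 ψ) = (1:ℂ) • (A 2 ψ)
      rw [one_smul]; exact tB05
    · -- B 0 , u 6
      show B 0 (B 2 ψ) = (1:ℂ) • (A 1 ψ)
      rw [one_smul]; exact tB06
    · -- B 0 , u 7
      show B 0 (A 0 (B 0 ψ)) = (-1:ℂ) • (A 0 ψ)
      rw [neg_one_smul]; exact tB07
    · -- B 1 , u 0
      show B 1 (ψ) = (1:ℂ) • (B 1 ψ)
      rw [one_smul]
    · -- B 1 , u 1
      show B 1 (A 0 ψ) = (1:ℂ) • (B 2 ψ)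
      rw [one_smul]; exact tB11
    · -- B 1 , u 2
      show B 1 (A 1 ψ) = (-1:ℂ) • (A 0 (B 0 ψ))
      rw [neg_one_smul]; exact c2
    · -- B 1 , u 3
      show B 1 (A 2 ψ) = (1:ℂ) • (B 0 ψ)
      rw [one_smul]; exact d3
    · -- B 1 , u 4
      show B 1 (B 0 ψ) = (1:ℂ) • (A 2 ψ)
      rw [one_smul]; exact tB14
    · -- B 1 , u 5
      show B 1 (B 1 ψ) = (1:ℂ) • (ψ)
      rw [one_smul]; exact hBinv 1 ψ
    · -- B 1 , u 6
      show B 1 (B 2 ψ) = (1:ℂ) • (A 0 ψ)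
      rw [one_smul]; exact d1
    · -- B 1 , u 7
      show B 1 (A 0 (B 0 ψ)) = (-1:ℂ) • (A 1 ψ)
      rw [neg_one_smul]; exact tB17
    · -- B 2 , u 0
      show B 2 (ψ) = (1:ℂ) • (B 2 ψ)
      rw [one_smul]
    · -- B 2 , u 1
      show B 2 (A 0 ψ) = (1:ℂ) • (B 1 ψ)
      rw [one_smul]; exact tB21
    · -- B 2 , u 2
      show B 2 (A 1 ψ) = (1:ℂ) • (B 0 ψ)
      rw [one_smul]; exact tB22
    · -- B 2 , u 3
      show B 2 (A 2 ψ) = (-1:ℂ) • (A 0 (B 0 ψ))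
      rw [neg_one_smul]; exact c4
    · -- B 2 , u 4
      show B 2 (B 0 ψ) = (1:ℂ) • (A 1 ψ)
      rw [one_smul]; exact tB24
    · -- B 2 , u 5
      show B 2 (B 1 ψ) = (1:ℂ) • (A 0 ψ)
      rw [one_smul]; exact tB25
    · -- B 2 , u 6
      show B 2 (B 2 ψ) = (1:ℂ) • (ψ)
      rw [one_smul]; exact hBinv 2 ψ
    · -- B 2 , u 7
      show B 2 (A 0 (B 0 ψ)) = (-1:ℂ) • (A 2 ψ)
      rw [neg_one_smul]; exact tB27
/-- under the maximal-violation hypotheses for `I₃` (setup as in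
Statement 2), the subspace `V = span{ψ, A₁ψ, A₂ψ, A₃ψ, B₁ψ, B₂ψ, B₃ψ, A₁B₁ψ}`
has dimension `8` and there is a linear isometric equivalence
`e : V ≃ ℂ² ⊗ ℂ² ⊗ ℂ²` with `e(Aᵢ v) = Xᵢ e(v)`, `e(Bᵢ v) = Zᵢ e(v)` for all
`v ∈ V`, and moreover `e(ψ) = |G'⟩`, the three-qubit complete-graph state. -/
theorem stmt8 {H : Type*} [NormedAddCommGroup H] [InnerProductSpace ℂ H]
    (A B : Fin 3 → H →L[ℂ] H)
    (hAsa : ∀ i (x y : H), (inner ℂ (A i x) y : ℂ) = inner ℂ x (A i y))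
    (hBsa : ∀ i (x y : H), (inner ℂ (B i x) y : ℂ) = inner ℂ x (B i y))
    (hAinv : ∀ i (x : H), A i (A i x) = x)
    (hBinv : ∀ i (x : H), B i (B i x) = x)
    (hAA : ∀ i j, i ≠ j → ∀ x : H, A i (A j x) = A j (A i x))
    (hAB : ∀ i j, i ≠ j → ∀ x : H, A i (B j x) = B j (A i x))
    (hBB : ∀ i j, i ≠ j → ∀ x : H, B i (B j x) = B j (B i x))
    (ψ : H) (hψ : ‖ψ‖ = 1)
    (h1 : A 0 (B 1 (B 2 ψ)) = ψ)
    (h2 : B 0 (A 1 (B 2 ψ)) = ψ)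
    (h3 : B 0 (B 1 (A 2 ψ)) = ψ)
    (h4 : A 0 (A 1 (A 2 ψ)) = -ψ)
    (V : Submodule ℂ H)
    (hV : V = Submodule.span ℂ
      ({ψ, A 0 ψ, A 1 ψ, A 2 ψ, B 0 ψ, B 1 ψ, B 2 ψ, A 0 (B 0 ψ)} : Set H)) :
    Module.finrank ℂ V = 8 ∧
    ∃ e : V ≃ₗᵢ[ℂ] EuclideanSpace ℂ (Fin 3 → Fin 2),
      (∀ (v : H) (hv : v ∈ V) (i : Fin 3) (hAv : A i v ∈ V) (hBv : B i v ∈ V),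
        e ⟨A i v, hAv⟩ = Matrix.toEuclideanLin (tensorFactor 3 PauliX i) (e ⟨v, hv⟩) ∧
        e ⟨B i v, hBv⟩ = Matrix.toEuclideanLin (tensorFactor 3 PauliZ i) (e ⟨v, hv⟩)) ∧
      ∀ hψV : ψ ∈ V, e ⟨ψ, hψV⟩ = graphState3 := by
  classical
  set uH : Fin 8 → H := ![ψ, A 0 ψ, A 1 ψ, A 2 ψ, B 0 ψ, B 1 ψ, B 2 ψ, A 0 (B 0 ψ)] with huH
  obtain ⟨honH, tabAH, tabBH⟩ :=
    key A B hAsa hBsa hAinv hBinv hAA hAB hBB ψ hψ h1 h2 h3 h4 uH huH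
  set uK : Fin 8 → KS := ![graphState3, XA 0 graphState3, XA 1 graphState3, XA 2 graphState3,
    ZB 0 graphState3, ZB 1 graphState3, ZB 2 graphState3, XA 0 (ZB 0 graphState3)] with huK
  obtain ⟨honK, tabAK, tabBK⟩ :=
    key XA ZB hXsa hZsa hXinv hZinv hXXc hXZc hZZc graphState3 hGnorm hK1 hK2 hK3 hK4 uK huK
  have hVr : V = Submodule.span ℂ (Set.range uH) := by
    rw [hV]
    congr 1
    ext x
    constructor
    · intro hx
      simp only [Set.mem_insert_iff, Set.mem_singleton_iff] at hx
      rcases hx with rfl|rfl|rfl|rfl|rfl|rfl|rfl|rfl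
      exacts [⟨0, rfl⟩, ⟨1, rfl⟩, ⟨2, rfl⟩, ⟨3, rfl⟩, ⟨4, rfl⟩, ⟨5, rfl⟩, ⟨6, rfl⟩, ⟨7, rfl⟩]
    · rintro ⟨j, rfl⟩
      fin_cases j
      · exact Set.mem_insert _ _
      · exact Set.mem_insert_of_mem _ (Set.mem_insert _ _)
      · exact Set.mem_insert_of_mem _ (Set.mem_insert_of_mem _ (Set.mem_insert _ _))
      · exact Set.mem_insert_of_mem _ (Set.mem_insert_of_mem _ (Set.mem_insert_of_mem _
          (Set.mem_insert _ _)))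
      · exact Set.mem_insert_of_mem _ (Set.mem_insert_of_mem _ (Set.mem_insert_of_mem _
          (Set.mem_insert_of_mem _ (Set.mem_insert _ _))))
      · exact Set.mem_insert_of_mem _ (Set.mem_insert_of_mem _ (Set.mem_insert_of_mem _
          (Set.mem_insert_of_mem _ (Set.mem_insert_of_mem _ (Set.mem_insert _ _)))))
      · exact Set.mem_insert_of_mem _ (Set.mem_insert_of_mem _ (Set.mem_insert_of_mem _
          (Set.mem_insert_of_mem _ (Set.mem_insert_of_mem _ (Set.mem_insert_of_mem _
          (Set.mem_insert _ _))))))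
      · exact Set.mem_insert_of_mem _ (Set.mem_insert_of_mem _ (Set.mem_insert_of_mem _
          (Set.mem_insert_of_mem _ (Set.mem_insert_of_mem _ (Set.mem_insert_of_mem _
          (Set.mem_insert_of_mem _ rfl))))))
  have huV : ∀ j, uH j ∈ V := fun j => by
    rw [hVr]; exact Submodule.subset_span ⟨j, rfl⟩
  haveI : FiniteDimensional ℂ V := by
    rw [hVr]; exact FiniteDimensional.span_of_finite ℂ (Set.finite_range _)
  have hfin : Module.finrank ℂ V = 8 := by
    rw [hVr, finrank_span_eq_card honH.linearIndependent, Fintype.card_fin]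
  set uV : Fin 8 → V := fun j => ⟨uH j, huV j⟩ with huV'
  have honV : Orthonormal ℂ uV := by
    rw [orthonormal_iff_ite] at honH ⊢
    intro i j
    rw [huV', Submodule.coe_inner]
    exact honH i j
  have spanV : ⊤ ≤ Submodule.span ℂ (Set.range uV) := by
    rw [honV.linearIndependent.span_eq_top_of_card_eq_finrank (by rw [Fintype.card_fin, hfin])]
  have spanK : ⊤ ≤ Submodule.span ℂ (Set.range uK) := by
    rw [honK.linearIndependent.span_eq_top_of_card_eq_finrank
      (by rw [Fintype.card_fin, finrank_euclideanSpace]; decide)]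
  let bV : OrthonormalBasis (Fin 8) ℂ V := OrthonormalBasis.mk honV spanV
  let bK : OrthonormalBasis (Fin 8) ℂ KS := OrthonormalBasis.mk honK spanK
  let e0 : V ≃ₗᵢ[ℂ] KS := bV.repr.trans bK.repr.symm
  have heuv : ∀ j, e0 (uV j) = uK j := by
    intro j
    have hb : bV.repr (uV j) = EuclideanSpace.single j 1 := by
      conv_lhs => rw [show uV j = bV j from (congrFun (OrthonormalBasis.coe_mk honV spanV) j).symm]
      exact bV.repr_self j
    show bK.repr.symm (bV.repr (uV j)) = uK j
    rw [hb, OrthonormalBasis.repr_symm_single]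
    exact congrFun (OrthonormalBasis.coe_mk honK spanK) j
  have hAV : ∀ (i : Fin 3) (x : H), x ∈ V → A i x ∈ V := by
    intro i x hx
    rw [hVr] at hx ⊢
    induction hx using Submodule.span_induction with
    | mem y h =>
      obtain ⟨j, rfl⟩ := h
      rw [tabAH i j]
      exact Submodule.smul_mem _ _ (Submodule.subset_span ⟨piA i j, rfl⟩)
    | zero => rw [map_zero]; exact Submodule.zero_mem _
    | add y z _ _ hy hz => rw [map_add]; exact Submodule.add_mem _ hy hz
    | smul a y _ hy => rw [map_smul]; exact Submodule.smul_mem _ _ hy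
  have hBV : ∀ (i : Fin 3) (x : H), x ∈ V → B i x ∈ V := by
    intro i x hx
    rw [hVr] at hx ⊢
    induction hx using Submodule.span_induction with
    | mem y h =>
      obtain ⟨j, rfl⟩ := h
      rw [tabBH i j]
      exact Submodule.smul_mem _ _ (Submodule.subset_span ⟨piB i j, rfl⟩)
    | zero => rw [map_zero]; exact Submodule.zero_mem _
    | add y z _ _ hy hz => rw [map_add]; exact Submodule.add_mem _ hy hz
    | smul a y _ hy => rw [map_smul]; exact Submodule.smul_mem _ _ hy
  have interA : ∀ (i : Fin 3) (w : V), e0 ⟨A i (w : H), hAV i w w.2⟩ = XA i (e0 w) := by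
    intro i
    have hmap : e0.toLinearEquiv.toLinearMap ∘ₗ ((A i).toLinearMap.restrict (hAV i))
        = (XA i).toLinearMap ∘ₗ e0.toLinearEquiv.toLinearMap := by
      apply Module.Basis.ext bV.toBasis
      intro j
      rw [show bV.toBasis j = uV j from by
        rw [OrthonormalBasis.coe_toBasis]
        exact congrFun (OrthonormalBasis.coe_mk honV spanV) j]
      simp only [LinearMap.comp_apply]
      have hres : ((A i).toLinearMap.restrict (hAV i)) (uV j)
          = (sigA i j • uV (piA i j) : V) := by
        apply Subtype.ext
        show A i (uH j) = _
        rw [tabAH i j]; rfl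
      rw [hres, map_smul]
      show (sigA i j) • e0 (uV (piA i j)) = XA i (e0 (uV j))
      rw [heuv, heuv, tabAK i j]
    intro w
    exact LinearMap.congr_fun hmap w
  have interB : ∀ (i : Fin 3) (w : V), e0 ⟨B i (w : H), hBV i w w.2⟩ = ZB i (e0 w) := by
    intro i
    have hmap : e0.toLinearEquiv.toLinearMap ∘ₗ ((B i).toLinearMap.restrict (hBV i))
        = (ZB i).toLinearMap ∘ₗ e0.toLinearEquiv.toLinearMap := by
      apply Module.Basis.ext bV.toBasis
      intro j
      rw [show bV.toBasis j = uV j from by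
        rw [OrthonormalBasis.coe_toBasis]
        exact congrFun (OrthonormalBasis.coe_mk honV spanV) j]
      simp only [LinearMap.comp_apply]
      have hres : ((B i).toLinearMap.restrict (hBV i)) (uV j)
          = (sigB i j • uV (piB i j) : V) := by
        apply Subtype.ext
        show B i (uH j) = _
        rw [tabBH i j]; rfl
      rw [hres, map_smul]
      show (sigB i j) • e0 (uV (piB i j)) = ZB i (e0 (uV j))
      rw [heuv, heuv, tabBK i j]
    intro w
    exact LinearMap.congr_fun hmap w
  refine ⟨hfin, e0, ?_, ?_⟩
  · intro v hv i hAv hBv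
    exact ⟨interA i ⟨v, hv⟩, interB i ⟨v, hv⟩⟩
  · intro hψV
    exact heuv 0
end

section
/- Under these hypotheses, the subspace Vₙ = span{ (Π_{i∈S} Bᵢ) ψ : S ⊆ {1,…,n} } of H is invariant under the action of all 2n observables: Aᵢ(Vₙ) ⊆ Vₙ and Bⱼ(Vₙ) ⊆ Vₙ for all i, j ∈ {1,…,n}; moreover dim Vₙ ≤ 2ⁿ. -/
/-- The product `Π_{i ∈ S} T i` of the operators `T i`, `i ∈ S`, multiplied in
increasing order of the index; all products used below are over pairwise commuting
operators, so the order of the factors is irrelevant. -/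
noncomputable def prodOver {H : Type*} [NormedAddCommGroup H] [InnerProductSpace ℂ H]
    {n : ℕ} (T : Fin n → H →L[ℂ] H) (S : Finset (Fin n)) : H →L[ℂ] H :=
  ((S.sort (· ≤ ·)).map T).prod

section Aux

variable {H : Type*} [NormedAddCommGroup H] [InnerProductSpace ℂ H] {n : ℕ}

private lemma multiset_noncommProd_eq {M : Type*} [Monoid M] (l : List M) (m : Multiset M)
    (h : m = ↑l) (comm) : m.noncommProd comm = l.prod := by
  subst h; exact Multiset.noncommProd_coe l comm

lemma prodOver_eq_noncommProd (T : Fin n → H →L[ℂ] H) (S : Finset (Fin n))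
    (h : (S : Set (Fin n)).Pairwise (Function.onFun Commute T)) :
    prodOver T S = S.noncommProd T h := by
  unfold prodOver Finset.noncommProd
  refine (multiset_noncommProd_eq ((S.sort (· ≤ ·)).map T) _ ?_ _).symm
  rw [← Finset.sort_eq S (· ≤ ·)]
  rfl

variable {T : Fin n → H →L[ℂ] H}

private lemma pw (hc : ∀ i j : Fin n, i ≠ j → Commute (T i) (T j)) (S : Finset (Fin n)) :
    (S : Set (Fin n)).Pairwise (Function.onFun Commute T) :=
  fun a _ b _ hab => hc a b hab

lemma prodOver_empty (T : Fin n → H →L[ℂ] H) : prodOver T ∅ = 1 := by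
  simp [prodOver]

lemma prodOver_insert (hc : ∀ i j : Fin n, i ≠ j → Commute (T i) (T j))
    {i : Fin n} {S : Finset (Fin n)} (hi : i ∉ S) :
    prodOver T (insert i S) = T i * prodOver T S := by
  rw [prodOver_eq_noncommProd T _ (pw hc _), prodOver_eq_noncommProd T S (pw hc _),
    Finset.noncommProd_insert_of_notMem _ _ _ _ hi]

lemma commute_prodOver (hc : ∀ i j : Fin n, i ≠ j → Commute (T i) (T j))
    (C : H →L[ℂ] H) {S : Finset (Fin n)} (hC : ∀ j ∈ S, Commute C (T j)) :
    Commute C (prodOver T S) := by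
  rw [prodOver_eq_noncommProd T S (pw hc _)]
  exact Finset.noncommProd_commute _ _ _ _ hC

lemma prodOver_mul_self (hc : ∀ i j : Fin n, i ≠ j → Commute (T i) (T j))
    (hinv : ∀ i, T i * T i = 1) (S : Finset (Fin n)) :
    prodOver T S * prodOver T S = 1 := by
  classical
  induction S using Finset.induction with
  | empty => rw [prodOver_empty]; simp
  | @insert i S hi ih =>
    have hcom : Commute (T i) (prodOver T S) :=
      commute_prodOver hc (T i) (fun j hj => hc i j (fun h => hi (h ▸ hj)))
    rw [prodOver_insert hc hi, (hcom.symm).mul_mul_mul_comm, hinv, ih, one_mul]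

lemma comm_apply {c p : H →L[ℂ] H} (h : Commute c p) (x : H) : c (p x) = p (c x) := by
  have := DFunLike.congr_fun h.eq x
  simpa using this

end Aux

/-- under the maximal-violation hypotheses for `Iₙ` (setup as in
Statement 9), the subspace `Vₙ = span{(Π_{i∈S} Bᵢ)ψ : S ⊆ {1,…,n}}` of `H` is
invariant under all `2n` observables (`Aᵢ(Vₙ) ⊆ Vₙ` and `Bⱼ(Vₙ) ⊆ Vₙ`), and
`dim Vₙ ≤ 2ⁿ`. -/
theorem stmt10 {H : Type*} [NormedAddCommGroup H] [InnerProductSpace ℂ H]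
    (n : ℕ) (hn : 3 ≤ n)
    (A B : Fin n → H →L[ℂ] H)
    (hAsa : ∀ i (x y : H), (inner ℂ (A i x) y : ℂ) = inner ℂ x (A i y))
    (hBsa : ∀ i (x y : H), (inner ℂ (B i x) y : ℂ) = inner ℂ x (B i y))
    (hAinv : ∀ i (x : H), A i (A i x) = x)
    (hBinv : ∀ i (x : H), B i (B i x) = x)
    (hAA : ∀ i j, i ≠ j → ∀ x : H, A i (A j x) = A j (A i x))
    (hAB : ∀ i j, i ≠ j → ∀ x : H, A i (B j x) = B j (A i x))
    (hBB : ∀ i j, i ≠ j → ∀ x : H, B i (B j x) = B j (B i x))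
    (ψ : H) (hψ : ‖ψ‖ = 1)
    (hplus : ∀ i, A i (prodOver B (Finset.univ.erase i) ψ) = ψ)
    (hminus : ∀ S : Finset (Fin n), S.card = 3 →
      prodOver A S (prodOver B Sᶜ ψ) = -ψ)
    (V : Submodule ℂ H)
    (hV : V = Submodule.span ℂ {v : H | ∃ S : Finset (Fin n), v = prodOver B S ψ}) :
    (∀ v ∈ V, ∀ i, A i v ∈ V ∧ B i v ∈ V) ∧
    Module.finrank ℂ V ≤ 2 ^ n := by
  classical
  subst hV
  -- operator-level facts
  have cAA : ∀ i j : Fin n, i ≠ j → Commute (A i) (A j) := fun i j h =>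
    ContinuousLinearMap.ext fun x => hAA i j h x
  have cAB : ∀ i j : Fin n, i ≠ j → Commute (A i) (B j) := fun i j h =>
    ContinuousLinearMap.ext fun x => hAB i j h x
  have cBB : ∀ i j : Fin n, i ≠ j → Commute (B i) (B j) := fun i j h =>
    ContinuousLinearMap.ext fun x => hBB i j h x
  have hBinv' : ∀ i, B i * B i = 1 := fun i => ContinuousLinearMap.ext fun x => hBinv i x
  have genV : ∀ S : Finset (Fin n), prodOver B S ψ ∈
      Submodule.span ℂ {v : H | ∃ S : Finset (Fin n), v = prodOver B S ψ} :=
    fun S => Submodule.subset_span ⟨S, rfl⟩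
  set W := Submodule.span ℂ {v : H | ∃ S : Finset (Fin n), v = prodOver B S ψ} with hW
  have pBinsert : ∀ {i : Fin n} {S : Finset (Fin n)}, i ∉ S → ∀ x : H,
      prodOver B (insert i S) x = B i (prodOver B S x) := by
    intro i S hi x
    rw [prodOver_insert cBB hi]; rfl
  have pBinvol : ∀ (S : Finset (Fin n)) (x : H), prodOver B S (prodOver B S x) = x := by
    intro S x
    have := DFunLike.congr_fun (prodOver_mul_self cBB hBinv' S) x
    simpa using this
  have cAP : ∀ (i : Fin n) (S : Finset (Fin n)), i ∉ S →
      Commute (A i) (prodOver B S) := fun i S hi =>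
    commute_prodOver cBB (A i) (fun j hj => cAB i j (fun h => hi (h ▸ hj)))
  have cBP : ∀ (i : Fin n) (S : Finset (Fin n)), i ∉ S →
      Commute (B i) (prodOver B S) := fun i S hi =>
    commute_prodOver cBB (B i) (fun j hj => cBB i j (fun h => hi (h ▸ hj)))
  -- A i ψ in terms of the B's
  have hAψ : ∀ i, A i ψ = prodOver B (Finset.univ.erase i) ψ := by
    intro i
    conv_lhs => rw [← hplus i]
    exact hAinv i _
  -- closure of W under the B i
  have genB : ∀ (S : Finset (Fin n)) (i : Fin n), B i (prodOver B S ψ) ∈ W := by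
    intro S i
    by_cases hi : i ∈ S
    · have hS : S = insert i (S.erase i) := (Finset.insert_erase hi).symm
      rw [hS, pBinsert (Finset.notMem_erase i S), hBinv]
      exact genV _
    · rw [← pBinsert hi]
      exact genV _
  have Bclosed : ∀ v ∈ W, ∀ i, B i v ∈ W := by
    intro v hv i
    induction hv using Submodule.span_induction with
    | mem x hx => obtain ⟨S, rfl⟩ := hx; exact genB S i
    | zero => simpa using Submodule.zero_mem W
    | add x y _ _ hx hy => rw [map_add]; exact Submodule.add_mem W hx hy
    | smul c x _ hx => rw [map_smul]; exact Submodule.smul_mem W c hx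
  have Pclosed : ∀ (S : Finset (Fin n)), ∀ v ∈ W, prodOver B S v ∈ W := by
    intro S
    induction S using Finset.induction with
    | empty => intro v hv; rw [prodOver_empty]; simpa using hv
    | @insert i S hi ih =>
      intro v hv
      rw [pBinsert hi]
      exact Bclosed _ (ih v hv) i
  -- the key relation A j (B j ψ) = - prodOver B univ ψ
  have hABψ : ∀ j, A j (B j ψ) = -(prodOver B Finset.univ ψ) := by
    intro j
    -- pick i, k with i, j, k pairwise distinct
    have h1 : (Finset.univ.erase j).Nonempty := by
      rw [← Finset.card_pos, Finset.card_erase_of_mem (Finset.mem_univ j),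
        Finset.card_univ, Fintype.card_fin]
      omega
    obtain ⟨i, hi⟩ := h1
    have h2 : ((Finset.univ.erase j).erase i).Nonempty := by
      rw [← Finset.card_pos, Finset.card_erase_of_mem hi,
        Finset.card_erase_of_mem (Finset.mem_univ j), Finset.card_univ, Fintype.card_fin]
      omega
    obtain ⟨k, hk⟩ := h2
    have hij : i ≠ j := (Finset.mem_erase.mp hi).1
    have hki : k ≠ i := (Finset.mem_erase.mp hk).1
    have hkj : k ≠ j := (Finset.mem_erase.mp (Finset.mem_erase.mp hk).2).1
    set E : Finset (Fin n) := (Finset.univ.erase k).erase j with hE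
    set E' : Finset (Fin n) := E.erase i with hE'
    have hjE : j ∉ E := Finset.notMem_erase _ _
    have hiE : i ∈ E := by
      rw [hE]
      exact Finset.mem_erase.mpr ⟨hij, Finset.mem_erase.mpr ⟨fun h => hki h.symm,
        Finset.mem_univ i⟩⟩
    have hiE' : i ∉ E' := Finset.notMem_erase _ _
    have hjE' : j ∉ E' := fun h => hjE (Finset.mem_of_mem_erase h)
    have hkE' : k ∉ E' := by
      intro h
      have := Finset.mem_of_mem_erase (Finset.mem_of_mem_erase h)
      exact (Finset.mem_erase.mp this).1 rfl
    have hEk : Finset.univ.erase k = insert j E := by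
      rw [hE, Finset.insert_erase]
      exact Finset.mem_erase.mpr ⟨fun h => hkj h.symm, Finset.mem_univ j⟩
    have hEi : E = insert i E' := (Finset.insert_erase hiE).symm
    -- step 1 : A j (A k ψ) = prodOver B E (A j (B j ψ))
    have step1 : A j (A k ψ) = prodOver B E (A j (B j ψ)) := by
      rw [hAψ k, hEk, pBinsert hjE, comm_apply (cBP j E hjE), comm_apply (cAP j E hjE)]
    -- step 2 : A i (A j (A k ψ)) = prodOver B E' (A i (B i (A j (B j ψ))))
    have step2 : A i (A j (A k ψ)) = prodOver B E' (A i (B i (A j (B j ψ)))) := by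
      rw [step1, hEi, pBinsert hiE', comm_apply (cBP i E' hiE'), comm_apply (cAP i E' hiE')]
    -- step 3 : from hminus, A i (A j (A k ψ)) = - prodOver B E' ψ
    have hcard : ({i, j, k} : Finset (Fin n)).card = 3 :=
      Finset.card_eq_three.mpr ⟨i, j, k, hij, Ne.symm hki, Ne.symm hkj, rfl⟩
    have hcompl : ({i, j, k} : Finset (Fin n))ᶜ = E' := by
      ext m
      simp only [Finset.mem_compl, Finset.mem_insert, Finset.mem_singleton, hE', hE,
        Finset.mem_erase, Finset.mem_univ, and_true]
      constructor
      · intro h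
        push_neg at h
        exact ⟨h.1, h.2.1, h.2.2⟩
      · intro h
        push_neg
        exact ⟨h.1, h.2.1, h.2.2⟩
    have hijk : prodOver A ({i, j, k} : Finset (Fin n)) (prodOver B E' ψ)
        = prodOver B E' (A i (A j (A k ψ))) := by
      have hinsert1 : i ∉ ({j, k} : Finset (Fin n)) := by simp [hij, Ne.symm hki]
      have hinsert2 : j ∉ ({k} : Finset (Fin n)) := by simp [Ne.symm hkj]
      have hsingle : prodOver A ({k} : Finset (Fin n)) = A k := by
        have : ({k} : Finset (Fin n)) = insert k ∅ := rfl
        rw [this, prodOver_insert cAA (Finset.notMem_empty k), prodOver_empty, mul_one]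
      have hexp : ∀ x : H, prodOver A ({i, j, k} : Finset (Fin n)) x = A i (A j (A k x)) := by
        intro x
        show prodOver A (insert i (insert j ({k} : Finset (Fin n)))) x = _
        rw [prodOver_insert cAA hinsert1, prodOver_insert cAA hinsert2, hsingle]
        rfl
      rw [hexp, comm_apply (cAP k E' hkE'), comm_apply (cAP j E' hjE'),
        comm_apply (cAP i E' hiE')]
    have step3 : prodOver B E' (A i (A j (A k ψ))) = -ψ := by
      rw [← hijk]
      have := hminus ({i, j, k} : Finset (Fin n)) hcard
      rwa [hcompl] at this
    -- combine
    rw [step2, pBinvol] at step3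
    have step5 : A i (B i (A j (B j ψ))) = -ψ := step3
    -- apply A i then B i
    have step6 : B i (A j (B j ψ)) = -(A i ψ) := by
      have := congrArg (A i) step5
      rwa [hAinv i, map_neg] at this
    have step7 : A j (B j ψ) = -(B i (A i ψ)) := by
      have := congrArg (B i) step6
      rwa [hBinv i, map_neg] at this
    rw [step7, hAψ i, ← pBinsert (Finset.notMem_erase i Finset.univ),
      Finset.insert_erase (Finset.mem_univ i)]
  -- closure of W under the A i
  have genA : ∀ (S : Finset (Fin n)) (i : Fin n), A i (prodOver B S ψ) ∈ W := by
    intro S i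
    by_cases hi : i ∈ S
    · have hS : S = insert i (S.erase i) := (Finset.insert_erase hi).symm
      have hni : i ∉ S.erase i := Finset.notMem_erase i S
      rw [hS, pBinsert hni, comm_apply (cBP i _ hni), comm_apply (cAP i _ hni), hABψ i, map_neg]
      exact Submodule.neg_mem W (Pclosed _ _ (genV _))
    · rw [comm_apply (cAP i S hi), hAψ i]
      exact Pclosed _ _ (genV _)
  have Aclosed : ∀ v ∈ W, ∀ i, A i v ∈ W := by
    intro v hv i
    induction hv using Submodule.span_induction with
    | mem x hx => obtain ⟨S, rfl⟩ := hx; exact genA S i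
    | zero => simpa using Submodule.zero_mem W
    | add x y _ _ hx hy => rw [map_add]; exact Submodule.add_mem W hx hy
    | smul c x _ hx => rw [map_smul]; exact Submodule.smul_mem W c hx
  refine ⟨fun v hv i => ⟨Aclosed v hv i, Bclosed v hv i⟩, ?_⟩
  -- dimension bound
  have hset : {v : H | ∃ S : Finset (Fin n), v = prodOver B S ψ}
      = Set.range (fun S : Finset (Fin n) => prodOver B S ψ) := by
    ext v
    simp [eq_comm]
  rw [hW, hset]
  have := finrank_range_le_card (R := ℂ) (fun S : Finset (Fin n) => prodOver B S ψ)
  rw [Fintype.card_finset, Fintype.card_fin] at this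
  exact this
end
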